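/- Let λ be a σ-finite measure on X which is R-invariant (∫ R f dλ = ∫ f dλ for every nonnegative measurable f : X → ℝ), and let h : X → ℝ be a nonnegative measurable λ-integrable function. Then R h = h λ-almost everywhere if and only if the measure λ.withDensity h is σ-invariant, i.e. Measure.map σ (λ.withDensity h) = λ.withDensity h. -/
import Mathlib


open MeasureTheory

/-- If `λ` is `R`-invariant and `h ≥ 0` is measurable and integrable, then
`R h = h` `λ`-a.e. iff the measure `λ.withDensity h` is `σ`-invariant. -/
theorem stmt_7 {X : Type*} [MeasurableSpace X] (σ : X → X)
    (hσ : Measurable σ) (hσsurj : Function.Surjective σ)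
    (R : (X → ℝ) → (X → ℝ))
    (hadd : ∀ f g : X → ℝ, R (f + g) = R f + R g)
    (hsmul : ∀ (c : ℝ) (f : X → ℝ), R (c • f) = c • R f)
    (hmeas : ∀ f : X → ℝ, Measurable f → Measurable (R f))
    (hpos : ∀ f : X → ℝ, 0 ≤ f → 0 ≤ R f)
    (hpull : ∀ f g : X → ℝ, Measurable f → Measurable g →
      R ((f ∘ σ) * g) = f * R g)
    (lam : Measure X) [SigmaFinite lam]
    (hRinv : ∀ f : X → ℝ, Measurable f → 0 ≤ f →
      ∫⁻ x, ENNReal.ofReal (R f x) ∂lam = ∫⁻ x, ENNReal.ofReal (f x) ∂lam)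
    (h : X → ℝ) (hh : Measurable h) (hh0 : 0 ≤ h) (hhint : Integrable h lam) :
    R h =ᵐ[lam] h ↔
      Measure.map σ (lam.withDensity fun x => ENNReal.ofReal (h x)) =
        lam.withDensity fun x => ENNReal.ofReal (h x) := by
  -- Step 1: the pushforward equals `lam.withDensity (ofReal (R h))`.
  have key : Measure.map σ (lam.withDensity fun x => ENNReal.ofReal (h x)) =
      lam.withDensity fun x => ENNReal.ofReal (R h x) := by
    ext A hA
    rw [Measure.map_apply hσ hA, withDensity_apply _ (hσ hA), withDensity_apply _ hA]
    -- real indicator function of A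
    set f : X → ℝ := A.indicator 1 with hf
    have hfmeas : Measurable f := measurable_one.indicator hA
    have hg0 : 0 ≤ (f ∘ σ) * h := fun x => by
      simp only [Pi.mul_apply, Function.comp_apply, hf]
      exact mul_nonneg (Set.indicator_nonneg (fun _ _ => zero_le_one) _) (hh0 x)
    have hgmeas : Measurable ((f ∘ σ) * h) := (hfmeas.comp hσ).mul hh
    have h1 : ∫⁻ x in σ ⁻¹' A, ENNReal.ofReal (h x) ∂lam
        = ∫⁻ x, ENNReal.ofReal (((f ∘ σ) * h) x) ∂lam := by
      rw [← lintegral_indicator (hσ hA)]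
      refine lintegral_congr fun x => ?_
      by_cases hx : σ x ∈ A <;>
        simp [hf, hx, Set.indicator_of_mem, Set.indicator_of_notMem, Set.mem_preimage]
    have h2 : ∫⁻ x, ENNReal.ofReal (R ((f ∘ σ) * h) x) ∂lam
        = ∫⁻ x, ENNReal.ofReal (((f ∘ σ) * h) x) ∂lam :=
      hRinv _ hgmeas hg0
    have h3 : ∫⁻ x, ENNReal.ofReal (R ((f ∘ σ) * h) x) ∂lam
        = ∫⁻ x in A, ENNReal.ofReal (R h x) ∂lam := by
      rw [hpull f h hfmeas hh, ← lintegral_indicator hA]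
      refine lintegral_congr fun x => ?_
      by_cases hx : x ∈ A <;>
        simp [hf, hx, Set.indicator_of_mem, Set.indicator_of_notMem]
    rw [h1, ← h2, h3]
  rw [key]
  rw [withDensity_eq_iff_of_sigmaFinite
    (hmeas h hh).ennreal_ofReal.aemeasurable
    hh.ennreal_ofReal.aemeasurable]
  constructor
  · intro H
    filter_upwards [H] with x hx
    simp only [hx]
  · intro H
    filter_upwards [H] with x hx
    have := hpos h hh0 x
    exact (ENNReal.ofReal_eq_ofReal_iff this (hh0 x)).mp hx
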